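/- Fix γ > 0, m > 0, numbers e > 0, z₀ > 0, and S' > 0. Then there exists a unique S ∈ (0, e) satisfying S'·c_z(e − S, z₀) = S·c_y(e − S, z₀) − m·c(e − S, z₀)^γ. (Equivalently: the function f(S) := S'·c_z(e−S, z₀) − S·c_y(e−S, z₀) + m·c(e−S, z₀)^γ is strictly decreasing on [0,e), satisfies f(0) > 0 and f(S)·c(e−S,z₀)^{−γ} → −∞ as S → e⁻, and hence has a unique zero in (0,e).) -/

import Mathlib

open Real Filter Set Topology

/-- Assumption C: `c` is a positive, homogeneous of degree 1, twice continuously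
differentiable function on `(0,∞)²` with partial derivatives `cy, cz > 0`, second partial
derivatives `cyy, czz < 0`, and Inada conditions. -/
structure AssumptionC (c cy cz cyy cyz czz : ℝ → ℝ → ℝ) : Prop where
  c_pos : ∀ ⦃y z : ℝ⦄, 0 < y → 0 < z → 0 < c y z
  homog : ∀ ⦃l y z : ℝ⦄, 0 < l → 0 < y → 0 < z → c (l * y) (l * z) = l * c y z
  hderiv_y : ∀ ⦃y z : ℝ⦄, 0 < y → 0 < z → HasDerivAt (fun u => c u z) (cy y z) y
  hderiv_z : ∀ ⦃y z : ℝ⦄, 0 < y → 0 < z → HasDerivAt (fun v => c y v) (cz y z) z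
  hderiv_yy : ∀ ⦃y z : ℝ⦄, 0 < y → 0 < z → HasDerivAt (fun u => cy u z) (cyy y z) y
  hderiv_yz : ∀ ⦃y z : ℝ⦄, 0 < y → 0 < z → HasDerivAt (fun v => cy y v) (cyz y z) z
  hderiv_zy : ∀ ⦃y z : ℝ⦄, 0 < y → 0 < z → HasDerivAt (fun u => cz u z) (cyz y z) y
  hderiv_zz : ∀ ⦃y z : ℝ⦄, 0 < y → 0 < z → HasDerivAt (fun v => cz y v) (czz y z) z
  cy_pos : ∀ ⦃y z : ℝ⦄, 0 < y → 0 < z → 0 < cy y z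
  cz_pos : ∀ ⦃y z : ℝ⦄, 0 < y → 0 < z → 0 < cz y z
  cyy_neg : ∀ ⦃y z : ℝ⦄, 0 < y → 0 < z → cyy y z < 0
  czz_neg : ∀ ⦃y z : ℝ⦄, 0 < y → 0 < z → czz y z < 0
  cont2 : ContinuousOn (fun p : ℝ × ℝ => (cyy p.1 p.2, cyz p.1 p.2, czz p.1 p.2))
    {p : ℝ × ℝ | 0 < p.1 ∧ 0 < p.2}
  inada_y : ∀ ⦃z : ℝ⦄, 0 < z → Tendsto (fun y => cy y z) (𝓝[>] (0:ℝ)) atTop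
  inada_z : ∀ ⦃y : ℝ⦄, 0 < y → Tendsto (fun z => cz y z) (𝓝[>] (0:ℝ)) atTop

section Aux
variable {c cy cz cyy cyz czz : ℝ → ℝ → ℝ}

lemma cz_homog0 (hC : AssumptionC c cy cz cyy cyz czz) {l y z : ℝ}
    (hl : 0 < l) (hy : 0 < y) (hz : 0 < z) : cz (l * y) (l * z) = cz y z := by
  have h1 : HasDerivAt (fun v => c (l * y) (l * v)) (cz (l * y) (l * z) * (l * 1)) z :=
    (hC.hderiv_z (by positivity) (by positivity)).comp z ((hasDerivAt_id z).const_mul l)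
  have h2 : HasDerivAt (fun v => l * c y v) (l * cz y z) z :=
    (hC.hderiv_z hy hz).const_mul l
  have heq : (fun v => l * c y v) =ᶠ[𝓝 z] (fun v => c (l * y) (l * v)) := by
    filter_upwards [Ioi_mem_nhds hz] with v hv
    exact (hC.homog hl hy hv).symm
  have := (h1.congr_of_eventuallyEq heq).unique h2
  have hl' : l ≠ 0 := ne_of_gt hl
  field_simp at this
  rw [mul_comm] at this
  rwa [mul_comm y l] at this

lemma cyz_pos (hC : AssumptionC c cy cz cyy cyz czz) {y z : ℝ}
    (hy : 0 < y) (hz : 0 < z) : 0 < cyz y z := by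
  have hz' : z ≠ 0 := ne_of_gt hz
  have hu : y * z * z⁻¹ = y := by field_simp
  have hinner : HasDerivAt (fun z' : ℝ => y * z * z'⁻¹) (y * z * (-(z ^ 2)⁻¹)) z :=
    (hasDerivAt_inv hz').const_mul (y * z)
  have houter : HasDerivAt (fun u => cz u z) (cyz y z) (y * z * z⁻¹) := by
    rw [hu]; exact hC.hderiv_zy hy hz
  have hg : HasDerivAt (fun z' : ℝ => cz (y * z * z'⁻¹) z)
      (cyz y z * (y * z * (-(z ^ 2)⁻¹))) z := by have := houter.comp z hinner; exact this
  have heq : (fun z' : ℝ => cz y z') =ᶠ[𝓝 z] (fun z' : ℝ => cz (y * z * z'⁻¹) z) := by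
    filter_upwards [Ioi_mem_nhds hz] with v hv
    have hv' : (0:ℝ) < v := hv
    have := cz_homog0 hC (l := v / z) (y := y * z * v⁻¹) (z := z)
      (by positivity) (by positivity) hz
    have e1 : v / z * (y * z * v⁻¹) = y := by field_simp
    have e2 : v / z * z = v := by field_simp
    rw [e1, e2] at this
    exact this
  have hkey := (hg.congr_of_eventuallyEq heq).unique (hC.hderiv_zz hy hz)
  -- hkey : cyz y z * (y * z * (-(z^2)⁻¹)) = czz y z
  have hA : y * z * (-(z ^ 2)⁻¹) < 0 := by
    have : (0:ℝ) < (z ^ 2)⁻¹ := by positivity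
    nlinarith [mul_pos hy hz]
  have hczz := hC.czz_neg hy hz
  by_contra h
  push_neg at h
  nlinarith [hkey, mul_nonneg (neg_nonneg.mpr h) (neg_nonneg.mpr (le_of_lt hA))]

lemma c_mono (hC : AssumptionC c cy cz cyy cyz czz) {z : ℝ} (hz : 0 < z) :
    StrictMonoOn (fun y => c y z) (Ioi 0) := by
  apply strictMonoOn_of_deriv_pos (convex_Ioi 0)
  · exact fun y hy => ((hC.hderiv_y hy hz).continuousAt).continuousWithinAt
  · intro x hx
    rw [interior_Ioi] at hx
    rw [(hC.hderiv_y hx hz).deriv]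
    exact hC.cy_pos hx hz

lemma cz_mono (hC : AssumptionC c cy cz cyy cyz czz) {z : ℝ} (hz : 0 < z) :
    StrictMonoOn (fun y => cz y z) (Ioi 0) := by
  apply strictMonoOn_of_deriv_pos (convex_Ioi 0)
  · exact fun y hy => ((hC.hderiv_zy hy hz).continuousAt).continuousWithinAt
  · intro x hx
    rw [interior_Ioi] at hx
    rw [(hC.hderiv_zy hx hz).deriv]
    exact cyz_pos hC hx hz

end Aux

/-- Given `γ, m, e, z₀, S' > 0`, there exists a unique `S ∈ (0,e)` satisfying
`S'·c_z(e−S, z₀) = S·c_y(e−S, z₀) − m·c(e−S, z₀)^γ`. -/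
theorem stmt_5 (c cy cz cyy cyz czz : ℝ → ℝ → ℝ)
    (hC : AssumptionC c cy cz cyy cyz czz) (γ m e z₀ S' : ℝ)
    (hγ : 0 < γ) (hm : 0 < m) (he : 0 < e) (hz : 0 < z₀) (hS' : 0 < S') :
    ∃! S : ℝ, S ∈ Ioo 0 e ∧
      S' * cz (e - S) z₀ = S * cy (e - S) z₀ - m * c (e - S) z₀ ^ γ := by
  set f : ℝ → ℝ := fun S => S' * cz (e - S) z₀ - S * cy (e - S) z₀ + m * c (e - S) z₀ ^ γ
    with hf_def
  -- derivative of f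
  have hfd : ∀ S : ℝ, S < e → HasDerivAt f
      (S' * (cyz (e - S) z₀ * (-1)) - (1 * cy (e - S) z₀ + S * (cyy (e - S) z₀ * (-1)))
        + m * ((cy (e - S) z₀ * (-1)) * γ * c (e - S) z₀ ^ (γ - 1))) S := by
    intro S hS
    have hy : 0 < e - S := by linarith
    have hneg : HasDerivAt (fun u : ℝ => e - u) (-1) S := by
      simpa using (hasDerivAt_id S).const_sub e
    have h1 : HasDerivAt (fun S : ℝ => cz (e - S) z₀) (cyz (e - S) z₀ * (-1)) S :=
      (hC.hderiv_zy hy hz).comp S hneg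
    have h2 : HasDerivAt (fun S : ℝ => cy (e - S) z₀) (cyy (e - S) z₀ * (-1)) S :=
      (hC.hderiv_yy hy hz).comp S hneg
    have h3 : HasDerivAt (fun S : ℝ => c (e - S) z₀) (cy (e - S) z₀ * (-1)) S :=
      (hC.hderiv_y hy hz).comp S hneg
    have h4 : HasDerivAt (fun S : ℝ => c (e - S) z₀ ^ γ)
        ((cy (e - S) z₀ * (-1)) * γ * c (e - S) z₀ ^ (γ - 1)) S :=
      h3.rpow_const (Or.inl (ne_of_gt (hC.c_pos hy hz)))
    have h5 : HasDerivAt (fun S : ℝ => S * cy (e - S) z₀)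
        (1 * cy (e - S) z₀ + S * (cyy (e - S) z₀ * (-1))) S :=
      (hasDerivAt_id S).mul h2
    exact ((h1.const_mul S').sub h5).add (h4.const_mul m)
  -- derivative negative on Ioo 0 e
  have hFneg : ∀ S ∈ Ioo (0:ℝ) e,
      S' * (cyz (e - S) z₀ * (-1)) - (1 * cy (e - S) z₀ + S * (cyy (e - S) z₀ * (-1)))
        + m * ((cy (e - S) z₀ * (-1)) * γ * c (e - S) z₀ ^ (γ - 1)) < 0 := by
    intro S hS
    have hy : 0 < e - S := by linarith [hS.2]
    have hcy := hC.cy_pos hy hz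
    have hcyy := hC.cyy_neg hy hz
    have hcyz := cyz_pos hC hy hz
    have hpow : 0 < c (e - S) z₀ ^ (γ - 1) := rpow_pos_of_pos (hC.c_pos hy hz) _
    nlinarith [mul_pos hS' hcyz, mul_pos hS.1 (neg_pos.mpr hcyy),
      mul_pos (mul_pos hm hγ) (mul_pos hcy hpow)]
  have hcont : ContinuousOn f (Ico 0 e) :=
    fun S hS => ((hfd S hS.2).continuousAt).continuousWithinAt
  have hanti : StrictAntiOn f (Ico 0 e) := by
    apply strictAntiOn_of_deriv_neg (convex_Ico 0 e) hcont
    intro x hx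
    rw [interior_Ico] at hx
    rw [(hfd x hx.2).deriv]
    exact hFneg x hx
  -- f 0 > 0
  have hf0 : 0 < f 0 := by
    have h1 := hC.cz_pos he hz
    have h2 : 0 < c e z₀ ^ γ := rpow_pos_of_pos (hC.c_pos he hz) _
    simp only [hf_def, sub_zero, zero_mul]
    positivity
  -- find S₁ with f S₁ < 0
  set B : ℝ := S' * cz e z₀ + m * c e z₀ ^ γ with hB_def
  have hB : 0 < B := by
    have h1 := hC.cz_pos he hz
    have h2 : 0 < c e z₀ ^ γ := rpow_pos_of_pos (hC.c_pos he hz) _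
    positivity
  set K : ℝ := 2 * B / e + 1 with hK_def
  have hK : 0 < K := by positivity
  have hev : ∀ᶠ y in 𝓝[>] (0:ℝ), K ≤ cy y z₀ := (hC.inada_y hz).eventually_ge_atTop K
  rw [eventually_iff, mem_nhdsGT_iff_exists_Ioo_subset] at hev
  obtain ⟨u, hu, hsub⟩ := hev
  have hu' : (0:ℝ) < u := hu
  set y₁ : ℝ := min (u / 2) (e / 2) with hy₁_def
  have hy₁pos : 0 < y₁ := lt_min (by positivity) (by positivity)
  have hy₁u : y₁ < u := lt_of_le_of_lt (min_le_left _ _) (by linarith)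
  have hy₁e : y₁ ≤ e / 2 := min_le_right _ _
  have hKy₁ : K ≤ cy y₁ z₀ := hsub ⟨hy₁pos, hy₁u⟩
  set S₁ : ℝ := e - y₁ with hS₁_def
  have hS₁mem : S₁ ∈ Ioo (0:ℝ) e := ⟨by simp only [hS₁_def]; linarith, by simp only [hS₁_def]; linarith⟩
  have heS₁ : e - S₁ = y₁ := by simp [hS₁_def]
  have hfS₁ : f S₁ < 0 := by
    have hczle : cz y₁ z₀ ≤ cz e z₀ :=
      (cz_mono hC hz).monotoneOn hy₁pos he (by linarith)
    have hcle : c y₁ z₀ ≤ c e z₀ :=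
      (c_mono hC hz).monotoneOn hy₁pos he (by linarith)
    have hcpow : c y₁ z₀ ^ γ ≤ c e z₀ ^ γ :=
      rpow_le_rpow (le_of_lt (hC.c_pos hy₁pos hz)) hcle (le_of_lt hγ)
    have hS₁cy : e / 2 * K ≤ S₁ * cy y₁ z₀ := by
      apply mul_le_mul (by linarith) hKy₁ (le_of_lt hK) (by linarith)
    have hKe : e / 2 * K = B + e / 2 := by
      rw [hK_def]; field_simp
    have : f S₁ = S' * cz y₁ z₀ - S₁ * cy y₁ z₀ + m * c y₁ z₀ ^ γ := by
      simp only [hf_def, heS₁]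
    rw [this]
    have h1 : S' * cz y₁ z₀ ≤ S' * cz e z₀ := by nlinarith
    have h2 : m * c y₁ z₀ ^ γ ≤ m * c e z₀ ^ γ := by nlinarith
    nlinarith
  -- existence via IVT (f is decreasing: use intermediate_value_Ioo')
  have hcont' : ContinuousOn f (Icc 0 S₁) :=
    hcont.mono (Icc_subset_Ico_right hS₁mem.2)
  have hivt := intermediate_value_Ioo' (le_of_lt hS₁mem.1) hcont'
  have h0mem : (0:ℝ) ∈ Ioo (f S₁) (f 0) := ⟨hfS₁, hf0⟩
  obtain ⟨S, hSmem, hSeq⟩ := hivt h0mem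
  have hSIoo : S ∈ Ioo (0:ℝ) e := ⟨hSmem.1, lt_trans hSmem.2 hS₁mem.2⟩
  refine ⟨S, ⟨hSIoo, ?_⟩, ?_⟩
  · have : S' * cz (e - S) z₀ - S * cy (e - S) z₀ + m * c (e - S) z₀ ^ γ = 0 := hSeq
    linarith
  · rintro T ⟨hTmem, hTeq⟩
    have hfT : f T = 0 := by simp only [hf_def]; linarith
    have hfS : f S = 0 := hSeq
    have hTIco : T ∈ Ico (0:ℝ) e := ⟨le_of_lt hTmem.1, hTmem.2⟩
    have hSIco : S ∈ Ico (0:ℝ) e := ⟨le_of_lt hSIoo.1, hSIoo.2⟩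
    exact hanti.injOn hTIco hSIco (by rw [hfT, hfS])
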